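/- The 𝒞-submodule Ĥ⁰ is closed under the shuffle product: for all w, w' ∈ Ĥ⁰, the element w ⧢_q w' belongs to Ĥ⁰. -/

import Mathlib

noncomputable section

/-- The coefficient ring `𝒞 = ℚ[ℏ, ℏ⁻¹]`, realized as Laurent polynomials over `ℚ`. -/
abbrev CC : Type := LaurentPolynomial ℚ

/-- The variable `ℏ ∈ 𝒞`. -/
def hb : CC := LaurentPolynomial.T 1

/-- Embedding of rational constants into `𝒞`. -/
def qs (x : ℚ) : CC := algebraMap ℚ CC x

/-- The non-commutative polynomial ring `H = 𝒞⟨a, b⟩`. -/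
abbrev H : Type := FreeAlgebra CC (Fin 2)

/-- The generator `a`. -/
def av : H := FreeAlgebra.ι CC 0

/-- The generator `b`. -/
def bv : H := FreeAlgebra.ι CC 1

/-- `e k` for `k : ℕ`:  `e 0 = e_{1̄} = ab`, and `e (k+1) = e_{k+1} = a^k (a+ℏ) b`. -/
def ev : ℕ → H
  | 0 => av * bv
  | (k+1) => av ^ k * (av + algebraMap CC H hb) * bv

/-- The monomial `e_{k_1} ⋯ e_{k_r}` attached to an index (a list over `N̂`,
with `0` encoding `1̄` and `k+1` encoding the positive integer `k+1`). -/
def eword (l : List ℕ) : H := (l.map ev).prod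

/-- `Ĥ¹`, as the `𝒞`-span of all monomials `e_k` (this coincides with the subalgebra
freely generated by the `e_k`). -/
def H1 : Submodule CC H := Submodule.span CC {x : H | ∃ l : List ℕ, x = eword l}

/-- `Ĥ⁰`, the `𝒞`-span of monomials `e_k` with `k ∈ Î₀` (first entry `≠ 1`). -/
def H0 : Submodule CC H := Submodule.span CC
  {x : H | ∃ l : List ℕ, l.head? ≠ some 1 ∧ x = eword l}

/-- The circle product `∘_q` on the generators. -/
def circ : ℕ → ℕ → H
  | 0, 0 => ev 2 - hb • ev 0
  | 0, (l+1) => ev (l+2)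
  | (k+1), 0 => ev (k+2)
  | (k+1), (l+1) => ev (k+l+2) + hb • ev (k+l+1)

/-- The defining properties of the shuffle product `⧢_q` on `H`. -/
def IsShuffle (sh : H →ₗ[CC] H →ₗ[CC] H) : Prop :=
  (∀ w : H, sh 1 w = w) ∧ (∀ w : H, sh w 1 = w) ∧
  (∀ w w' : H, sh (av * w) (av * w') =
      av * (sh (av * w) w' + sh w (av * w') + hb • sh w w')) ∧
  (∀ w w' : H, sh (bv * w) w' = bv * sh w w') ∧
  (∀ w w' : H, sh w (bv * w') = bv * sh w w')

/-- The defining properties of the stuffle product `*_q` on `Ĥ¹`. -/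
def IsStuffle (st : H →ₗ[CC] H →ₗ[CC] H) : Prop :=
  (∀ w : H, st 1 w = w) ∧ (∀ w : H, st w 1 = w) ∧
  (∀ k l : ℕ, ∀ w w' : H, w ∈ H1 → w' ∈ H1 →
    st (ev k * w) (ev l * w') =
      ev k * st w (ev l * w') + ev l * st (ev k * w) w' + circ k l * st w w')

/-- The q-integer `[m] = (1-q^m)/(1-q)`. -/
def qint (q : ℂ) (m : ℕ) : ℂ := (1 - q ^ m) / (1 - q)

/-- `F_k(m)`:  `F 0 = F_{1̄}` and `F (k+1) = F_{k+1}`. -/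
def Fq (q : ℂ) : ℕ → ℕ → ℂ
  | 0, m => q ^ m / qint q m
  | (k+1), m => q ^ (k * m) / (qint q m) ^ (k + 1)

/-- `ζ_q(k)` for an index `k` (a list over `N̂`): the sum over `m_1 > ⋯ > m_r ≥ 1`. -/
def zetaq (q : ℂ) (l : List ℕ) : ℂ :=
  ∑' m : {f : Fin l.length → ℕ // StrictAnti f ∧ ∀ i, 0 < f i},
    ∏ i : Fin l.length, Fq q (l.get i) (m.1 i)

/-- The defining properties of the `𝒞`-linear map `Z_q` (as a map on all of `H`
extending the one on `Ĥ⁰`): additive, `𝒞`-semilinear along `ρ`, sending `e_k ↦ ζ_q(k)`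
for `k ∈ Î₀`. -/
def IsZq (ρ : CC →ₐ[ℚ] ℂ) (q : ℂ) (Z : H →+ ℂ) : Prop :=
  (∀ c : CC, ∀ w : H, Z (c • w) = ρ c * Z w) ∧
  (∀ l : List ℕ, l.head? ≠ some 1 → Z (eword l) = zetaq q l)


open Submodule

/-- Word monomial in `H` attached to a list of letters. -/
def Wd (l : List (Fin 2)) : H := (l.map (FreeAlgebra.ι CC)).prod

lemma Wd_nil : Wd ([] : List (Fin 2)) = 1 := rfl

lemma Wd_cons (x : Fin 2) (l : List (Fin 2)) :
    Wd (x :: l) = FreeAlgebra.ι CC x * Wd l := by simp [Wd]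

lemma Wd_append (l l' : List (Fin 2)) : Wd (l ++ l') = Wd l * Wd l' := by simp [Wd]

/-- nonempty words ending with `b`. -/
def BS : Set H := {x | ∃ l : List (Fin 2), l.getLast? = some 1 ∧ x = Wd l}

/-- words starting with `a` and ending with `b`. -/
def GS : Set H := {x | ∃ l : List (Fin 2), l.head? = some 0 ∧ l.getLast? = some 1 ∧ x = Wd l}

lemma lin_span {f : H →ₗ[CC] H} {S : Set H} {U : Submodule CC H}
    (h : ∀ x ∈ S, f x ∈ U) : ∀ x ∈ span CC S, f x ∈ U :=
  fun _ hx => Submodule.span_le.mpr (fun x hxS => Submodule.mem_comap.mpr (h x hxS)) hx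

lemma bilin_span {f : H →ₗ[CC] H →ₗ[CC] H} {S T : Set H} {U : Submodule CC H}
    (h : ∀ x ∈ S, ∀ y ∈ T, f x y ∈ U) :
    ∀ x ∈ span CC S, ∀ y ∈ span CC T, f x y ∈ U := by
  intro x hx
  induction hx using Submodule.span_induction with
  | mem x hxS =>
    intro y hy
    induction hy using Submodule.span_induction with
    | mem y hyT => exact h x hxS y hyT
    | zero => simp
    | add y z _ _ hy hz => rw [map_add]; exact add_mem hy hz
    | smul c y _ hy => rw [map_smul]; exact U.smul_mem c hy
  | zero => intro y hy; simp
  | add x z _ _ hx hz => intro y hy; rw [map_add, LinearMap.add_apply]; exact add_mem (hx y hy) (hz y hy)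
  | smul c x _ hx => intro y hy; rw [map_smul, LinearMap.smul_apply]; exact U.smul_mem c (hx y hy)

lemma mul_span_span {S T : Set H} {U : Submodule CC H}
    (h : ∀ x ∈ S, ∀ y ∈ T, x * y ∈ U) :
    ∀ x ∈ span CC S, ∀ y ∈ span CC T, x * y ∈ U :=
  bilin_span (f := LinearMap.mul CC H) h

lemma getLast_tail {x : Fin 2} {l : List (Fin 2)} (h : (x :: l).getLast? = some 1)
    (hl : l ≠ []) : l.getLast? = some 1 := by
  cases l with
  | nil => exact absurd rfl hl
  | cons a t => rwa [List.getLast?_cons_cons] at h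

lemma mem_BS_cons {x : H} (c : Fin 2) (hx : x ∈ BS) :
    FreeAlgebra.ι CC c * x ∈ BS := by
  obtain ⟨l, hl, rfl⟩ := hx
  refine ⟨c :: l, ?_, (Wd_cons _ _).symm⟩
  cases l with
  | nil => simp at hl
  | cons a t => rwa [List.getLast?_cons_cons]

lemma mul_av_SB {x : H} (hx : x ∈ span CC BS) : av * x ∈ span CC BS :=
  lin_span (f := LinearMap.mulLeft CC av)
    (fun y hy => subset_span (mem_BS_cons 0 hy)) x hx

lemma mul_bv_SB {x : H} (hx : x ∈ span CC BS) : bv * x ∈ span CC BS :=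
  lin_span (f := LinearMap.mulLeft CC bv)
    (fun y hy => subset_span (mem_BS_cons 1 hy)) x hx

lemma mul_av_GS {x : H} (hx : x ∈ span CC BS) : av * x ∈ span CC GS := by
  refine lin_span (f := LinearMap.mulLeft CC av) (fun y hy => ?_) x hx
  obtain ⟨l, hl, rfl⟩ := hy
  refine subset_span ⟨0 :: l, rfl, ?_, (Wd_cons _ _).symm⟩
  cases l with
  | nil => simp at hl
  | cons a t => rwa [List.getLast?_cons_cons]

/-- Shuffles of b-ending words are spans of b-ending words. -/
lemma sh_words_mem {sh : H →ₗ[CC] H →ₗ[CC] H} (hsh : IsShuffle sh) :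
    ∀ n : ℕ, ∀ u u' : List (Fin 2), u.length + u'.length ≤ n →
      u.getLast? = some 1 → u'.getLast? = some 1 →
      sh (Wd u) (Wd u') ∈ span CC BS := by
  obtain ⟨h1l, h1r, haa, hbl, hbr⟩ := hsh
  intro n
  induction n with
  | zero =>
    intro u u' hlen hu hu'
    cases u with
    | nil => simp at hu
    | cons x t => simp at hlen
  | succ n ih =>
    intro u u' hlen hu hu'
    cases u with
    | nil => simp at hu
    | cons x u₀ =>
      cases u' with
      | nil => simp at hu'
      | cons y u₀' =>
        rcases (show x = 0 ∨ x = 1 by omega) with rfl | rfl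
        · rcases (show y = 0 ∨ y = 1 by omega) with rfl | rfl
          · -- both start with a
            have hu₀ : u₀ ≠ [] := by rintro rfl; simp at hu
            have hu₀' : u₀' ≠ [] := by rintro rfl; simp at hu'
            have hlast₀ : u₀.getLast? = some 1 := getLast_tail hu hu₀
            have hlast₀' : u₀'.getLast? = some 1 := getLast_tail hu' hu₀'
            have hlen₀ : u₀.length + u₀'.length + 1 ≤ n := by
              have h1 : 1 ≤ u₀.length := List.length_pos_iff.mpr hu₀
              simp only [List.length_cons] at hlen; omega
            rw [Wd_cons, Wd_cons]
            show sh (av * Wd u₀) (av * Wd u₀') ∈ span CC BS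
            rw [haa]
            refine mul_av_SB (add_mem (add_mem ?_ ?_) (smul_mem _ _ ?_))
            · have := ih (0 :: u₀) u₀' (by simp only [List.length_cons]; omega) hu hlast₀'
              rwa [Wd_cons] at this
            · have := ih u₀ (0 :: u₀') (by simp only [List.length_cons]; omega) hlast₀ hu'
              rwa [Wd_cons] at this
            · exact ih u₀ u₀' (by omega) hlast₀ hlast₀'
          · -- u' starts with b
            rw [Wd_cons (1 : Fin 2)]
            show sh (Wd (0 :: u₀)) (bv * Wd u₀') ∈ span CC BS
            rw [hbr]
            refine mul_bv_SB ?_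
            cases u₀' with
            | nil =>
              rw [Wd_nil, h1r]
              exact subset_span ⟨0 :: u₀, hu, rfl⟩
            | cons z t =>
              exact ih (0 :: u₀) (z :: t)
                (by simp only [List.length_cons] at hlen ⊢; omega)
                hu (getLast_tail hu' (by simp))
        · -- u starts with b
          rw [Wd_cons (1 : Fin 2)]
          show sh (bv * Wd u₀) (Wd (y :: u₀')) ∈ span CC BS
          rw [hbl]
          refine mul_bv_SB ?_
          cases u₀ with
          | nil =>
            rw [Wd_nil, h1l]
            exact subset_span ⟨y :: u₀', hu', rfl⟩
          | cons z t =>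
            exact ih (z :: t) (y :: u₀')
              (by simp only [List.length_cons] at hlen ⊢; omega)
              (getLast_tail hu (by simp)) hu'

/-- Shuffles of good words are spans of good words. -/
lemma sh_good_mem {sh : H →ₗ[CC] H →ₗ[CC] H} (hsh : IsShuffle sh)
    {u u' : List (Fin 2)} (hu0 : u.head? = some 0) (hu1 : u.getLast? = some 1)
    (hu0' : u'.head? = some 0) (hu1' : u'.getLast? = some 1) :
    sh (Wd u) (Wd u') ∈ span CC GS := by
  cases u with
  | nil => simp at hu0
  | cons x u₀ =>
    cases u' with
    | nil => simp at hu0'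
    | cons y u₀' =>
      have hx : x = 0 := by simpa using hu0
      have hy : y = 0 := by simpa using hu0'
      subst hx; subst hy
      have hu₀ : u₀ ≠ [] := by rintro rfl; simp at hu1
      have hu₀' : u₀' ≠ [] := by rintro rfl; simp at hu1'
      have hlast₀ : u₀.getLast? = some 1 := getLast_tail hu1 hu₀
      have hlast₀' : u₀'.getLast? = some 1 := getLast_tail hu1' hu₀'
      rw [Wd_cons, Wd_cons]
      show sh (av * Wd u₀) (av * Wd u₀') ∈ span CC GS
      rw [hsh.2.2.1]
      refine mul_av_GS (add_mem (add_mem ?_ ?_) (smul_mem _ _ ?_))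
      · have := sh_words_mem hsh ((0 :: u₀).length + u₀'.length) (0 :: u₀) u₀' le_rfl hu1 hlast₀'
        rwa [Wd_cons] at this
      · have := sh_words_mem hsh (u₀.length + (0 :: u₀').length) u₀ (0 :: u₀') le_rfl hlast₀ hu1'
        rwa [Wd_cons] at this
      · exact sh_words_mem hsh _ u₀ u₀' le_rfl hlast₀ hlast₀'

lemma eword_nil : eword [] = 1 := rfl

lemma eword_cons (k : ℕ) (l : List ℕ) : eword (k :: l) = ev k * eword l := by
  simp [eword]

lemma hb_smul_unit (x : H) : (LaurentPolynomial.T (-1) : CC) • (hb • x) = x := by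
  have h1 : LaurentPolynomial.T (-1) * hb = (1 : CC) := by
    rw [hb, ← LaurentPolynomial.T_add]
    norm_num [LaurentPolynomial.T_zero]
  rw [smul_smul, h1, one_smul]

lemma Wd_rep (k : ℕ) : Wd (List.replicate k 0 ++ [1]) = av ^ k * bv := by
  induction k with
  | zero => simp [Wd_cons, Wd_nil, bv]
  | succ n ihn =>
    rw [List.replicate_succ, List.cons_append, Wd_cons, ihn, pow_succ', mul_assoc]
    rfl

lemma ev_succ' (k : ℕ) : ev (k+1) = av ^ (k+1) * bv + hb • (av ^ k * bv) := by
  show av ^ k * (av + algebraMap CC H hb) * bv = _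
  rw [mul_add, add_mul, mul_assoc (av ^ k) (algebraMap CC H hb) bv, ← Algebra.smul_def,
    mul_smul_comm, ← pow_succ]

/-- generators with any index -/
def EVS1 : Set H := {x | ∃ k : ℕ, x = ev k}
/-- generators with index `≠ 1` -/
def EVS0 : Set H := {x | ∃ k : ℕ, k ≠ 1 ∧ x = ev k}

lemma rep_last (k : ℕ) : (List.replicate k (0 : Fin 2) ++ [1]).getLast? = some 1 :=
  List.getLast?_concat

lemma rep_head (k : ℕ) : (List.replicate (k+1) (0 : Fin 2) ++ [1]).head? = some 0 := by
  rw [List.replicate_succ]; rfl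

lemma ev_mem_SB (k : ℕ) : ev k ∈ span CC BS := by
  cases k with
  | zero =>
    refine subset_span ⟨[0, 1], rfl, ?_⟩
    show av * bv = _
    simp [Wd_cons, Wd_nil, av, bv]
  | succ n =>
    rw [ev_succ', ← Wd_rep, ← Wd_rep]
    exact add_mem (subset_span ⟨_, rep_last _, rfl⟩)
      (smul_mem _ _ (subset_span ⟨_, rep_last _, rfl⟩))

lemma ev_mem_GS {k : ℕ} (hk : k ≠ 1) : ev k ∈ span CC GS := by
  match k, hk with
  | 0, _ =>
    refine subset_span ⟨[0, 1], rfl, rfl, ?_⟩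
    show av * bv = _
    simp [Wd_cons, Wd_nil, av, bv]
  | (n+2), _ =>
    rw [ev_succ', ← Wd_rep, ← Wd_rep]
    exact add_mem (subset_span ⟨_, rep_head _, rep_last _, rfl⟩)
      (smul_mem _ _ (subset_span ⟨_, rep_head _, rep_last _, rfl⟩))

lemma eword_mem_B1 : ∀ l : List ℕ, eword l ∈ span CC ({1} ∪ BS) := by
  intro l
  induction l with
  | nil => exact subset_span (Or.inl rfl)
  | cons k l ih =>
    rw [eword_cons]
    have hmul : ∀ x ∈ BS, ∀ y ∈ ({1} ∪ BS : Set H), x * y ∈ span CC ({1} ∪ BS) := by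
      rintro x ⟨m, hm, rfl⟩ y (rfl | ⟨m', hm', rfl⟩)
      · rw [mul_one]; exact subset_span (Or.inr ⟨m, hm, rfl⟩)
      · rw [← Wd_append]
        refine subset_span (Or.inr ⟨m ++ m', ?_, rfl⟩)
        rw [List.getLast?_append_of_ne_nil m (by rintro rfl; simp at hm')]
        exact hm'
    exact mul_span_span hmul _ (ev_mem_SB k) _ ih

lemma H0_le_SA : H0 ≤ span CC ({1} ∪ GS) := by
  rw [H0]
  refine span_le.mpr ?_
  rintro x ⟨l, hl, rfl⟩
  cases l with
  | nil => exact subset_span (Or.inl rfl)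
  | cons k l' =>
    have hk : k ≠ 1 := fun h => hl (by simp [h])
    rw [eword_cons]
    have hmul : ∀ x ∈ GS, ∀ y ∈ ({1} ∪ BS : Set H), x * y ∈ span CC ({1} ∪ GS) := by
      rintro x ⟨g, hg0, hg1, rfl⟩ y (rfl | ⟨m', hm', rfl⟩)
      · rw [mul_one]; exact subset_span (Or.inr ⟨g, hg0, hg1, rfl⟩)
      · rw [← Wd_append]
        refine subset_span (Or.inr ⟨g ++ m', ?_, ?_, rfl⟩)
        · cases g with
          | nil => simp at hg0
          | cons a t => simpa using hg0
        · rw [List.getLast?_append_of_ne_nil g (by rintro rfl; simp at hm')]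
          exact hm'
    exact mul_span_span hmul _ (ev_mem_GS hk) _ (eword_mem_B1 l')

lemma avpow_bv_mem_T : ∀ c : ℕ, av ^ (c+1) * bv ∈ span CC EVS0 := by
  intro c
  induction c with
  | zero =>
    rw [pow_one]
    exact subset_span ⟨0, by norm_num, rfl⟩
  | succ c ih =>
    have h : av ^ (c+2) * bv = ev (c+2) - hb • (av ^ (c+1) * bv) := by
      rw [ev_succ' (c+1)]; abel
    rw [h]
    exact sub_mem (subset_span ⟨c+2, by omega, rfl⟩) (smul_mem _ _ ih)

lemma bv_mem_T1 : bv ∈ span CC EVS1 := by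
  have h : bv = (LaurentPolynomial.T (-1) : CC) • (ev 1 - ev 0) := by
    rw [ev_succ' 0, show ev 0 = av * bv from rfl, pow_one, pow_zero, one_mul,
      add_sub_cancel_left, hb_smul_unit]
  rw [h]
  exact smul_mem _ _ (sub_mem (subset_span ⟨1, rfl⟩) (subset_span ⟨0, rfl⟩))

lemma T1_mul_H1 : ∀ x ∈ span CC EVS1, ∀ y ∈ H1, x * y ∈ H1 := by
  refine mul_span_span ?_
  rintro x ⟨k, rfl⟩ y ⟨m, rfl⟩
  exact subset_span ⟨k :: m, (eword_cons k m).symm⟩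

lemma T_mul_H1_H0 : ∀ x ∈ span CC EVS0, ∀ y ∈ H1, x * y ∈ H0 := by
  refine mul_span_span ?_
  rintro x ⟨k, hk, rfl⟩ y ⟨m, rfl⟩
  exact subset_span ⟨k :: m, by simp [hk], (eword_cons k m).symm⟩

lemma wd_mem : ∀ l : List (Fin 2), l.getLast? = some 1 →
    ∀ c : ℕ, Wd (List.replicate c 0 ++ l) ∈ H1 ∧ Wd (List.replicate (c+1) 0 ++ l) ∈ H0 := by
  intro l
  induction l with
  | nil => intro h; simp at h
  | cons x l' ih =>
    intro h c
    rcases (show x = 0 ∨ x = 1 by omega) with rfl | rfl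
    · have hl' : l' ≠ [] := by rintro rfl; simp at h
      have h' : l'.getLast? = some 1 := getLast_tail h hl'
      have e1 : ∀ d : ℕ, List.replicate d (0 : Fin 2) ++ 0 :: l'
          = List.replicate (d+1) 0 ++ l' := by
        intro d
        rw [List.replicate_succ', List.append_assoc]
        rfl
      constructor
      · rw [e1 c]; exact (ih h' (c+1)).1
      · rw [e1 (c+1)]; exact (ih h' (c+1)).2
    · have e2 : ∀ d : ℕ, List.replicate d (0 : Fin 2) ++ 1 :: l'
          = (List.replicate d 0 ++ [1]) ++ l' := by
        intro d; rw [List.append_assoc]; rfl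
      have hWl' : Wd l' ∈ H1 := by
        cases l' with
        | nil => exact subset_span ⟨[], rfl⟩
        | cons z t =>
          have h' : (z :: t).getLast? = some 1 := getLast_tail h (by simp)
          simpa using (ih h' 0).1
      constructor
      · rw [e2 c, Wd_append, Wd_rep]
        cases c with
        | zero =>
          rw [pow_zero, one_mul]
          exact T1_mul_H1 bv bv_mem_T1 _ hWl'
        | succ c' =>
          refine T1_mul_H1 _ ?_ _ hWl'
          refine span_mono (fun z hz => ?_) (avpow_bv_mem_T c')
          obtain ⟨k, _, rfl⟩ := hz
          exact ⟨k, rfl⟩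
      · rw [e2 (c+1), Wd_append, Wd_rep]
        exact T_mul_H1_H0 _ (avpow_bv_mem_T c) _ hWl'

lemma SA_le_H0 : span CC ({1} ∪ GS) ≤ H0 := by
  refine span_le.mpr ?_
  rintro x (rfl | ⟨g, hg0, hg1, rfl⟩)
  · exact subset_span ⟨[], by simp, rfl⟩
  · cases g with
    | nil => simp at hg0
    | cons z g₀ =>
      have hz : z = 0 := by simpa using hg0
      subst hz
      have hg₀ : g₀ ≠ [] := by rintro rfl; simp at hg1
      have h' : g₀.getLast? = some 1 := getLast_tail hg1 hg₀
      have := (wd_mem g₀ h' 0).2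
      simpa using this

/-- `Ĥ⁰` is closed under the shuffle product `⧢_q`. -/
theorem H0_closed_under_shuffle
    (sh : H →ₗ[CC] H →ₗ[CC] H) (hsh : IsShuffle sh)
    (w w' : H) (hw : w ∈ H0) (hw' : w' ∈ H0) :
    sh w w' ∈ H0 := by
  have gens : ∀ x ∈ ({1} ∪ GS : Set H), ∀ y ∈ ({1} ∪ GS : Set H),
      sh x y ∈ span CC ({1} ∪ GS) := by
    rintro x (rfl | ⟨g, hg0, hg1, rfl⟩) y hy
    · rw [hsh.1]
      exact subset_span hy
    · rcases hy with rfl | ⟨g', hg0', hg1', rfl⟩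
      · rw [hsh.2.1]
        exact subset_span (Or.inr ⟨g, hg0, hg1, rfl⟩)
      · exact span_mono Set.subset_union_right (sh_good_mem hsh hg0 hg1 hg0' hg1')
  exact SA_le_H0 (bilin_span gens w (H0_le_SA hw) w' (H0_le_SA hw'))
end
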